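/- arXiv:1408.3867 — 2 statements merged into one kernel-verified Lean document; each statement's English description precedes it below -/
import Mathlib

section
/- Let S ⊂ ℝ³ be a measurable set of finite Lebesgue volume V and let z ∈ ℝ³. Then ∫_S |y − z|^{−1} dy ≤ 2π (3V/(4π))^{2/3}; that is, the integral over S of the weakly singular kernel 1/|y−z| is bounded by its value over the ball centered at z having the same volume V. -/
open MeasureTheory

open Real in
private lemma vol_ball3 (z : EuclideanSpace ℝ (Fin 3)) {r : ℝ} (hr : 0 ≤ r) :
    volume (Metric.ball z r) = ENNReal.ofReal (4 / 3 * π * r ^ 3) := by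
  have hG : Real.Gamma ((Fintype.card (Fin 3) : ℝ) / 2 + 1) = 3 / 4 * Real.sqrt π := by
    have hcard : (Fintype.card (Fin 3) : ℝ) = 3 := by simp
    have h12 : Real.Gamma (1 / 2 + 1) = 1 / 2 * Real.sqrt π := by
      rw [Real.Gamma_add_one (by norm_num), Real.Gamma_one_half_eq]
    have h32 : ((3 : ℝ)) / 2 = 1 / 2 + 1 := by norm_num
    rw [hcard, Real.Gamma_add_one (by norm_num), h32, h12]
    ring
  rw [EuclideanSpace.volume_ball, hG]
  have hs : Real.sqrt π ^ Fintype.card (Fin 3) = π * Real.sqrt π := by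
    have : Fintype.card (Fin 3) = 3 := by simp
    rw [this, pow_succ, sq_sqrt Real.pi_pos.le]
  rw [hs]
  have hsne : Real.sqrt π ≠ 0 := by positivity
  have : π * Real.sqrt π / (3 / 4 * Real.sqrt π) = 4 / 3 * π := by
    field_simp
  rw [this, ← ENNReal.ofReal_pow hr, ← ENNReal.ofReal_mul (by positivity)]
  congr 1
  have : Fintype.card (Fin 3) = 3 := by simp
  rw [this]
  ring

open Real Set in
theorem stmt5 (S : Set (EuclideanSpace ℝ (Fin 3))) (hS : MeasurableSet S)
    (V : ℝ) (hV0 : 0 ≤ V) (hV : volume S = ENNReal.ofReal V)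
    (z : EuclideanSpace ℝ (Fin 3)) :
    (∫ y in S, 1 / dist y z ∂(volume)) ≤
      2 * Real.pi * (3 * V / (4 * Real.pi)) ^ ((2 : ℝ) / 3) := by
  have hπ := Real.pi_pos
  set f : EuclideanSpace ℝ (Fin 3) → ℝ := fun y => 1 / dist y z with hfdef
  have hdm : Measurable fun y : EuclideanSpace ℝ (Fin 3) => dist y z :=
    (continuous_id.dist continuous_const).measurable
  have hfm : Measurable f := measurable_const.div hdm
  have hf0 : ∀ y, 0 ≤ f y := fun y => by positivity
  rcases eq_or_lt_of_le hV0 with hV0' | hVpos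
  · have hS0 : volume S = 0 := by rw [hV, ← hV0', ENNReal.ofReal_zero]
    have hr0 : volume.restrict S = 0 := Measure.restrict_eq_zero.mpr hS0
    rw [hr0, integral_zero_measure]
    have h0 : (3 * V / (4 * Real.pi)) = 0 := by rw [← hV0']; ring
    rw [h0, Real.zero_rpow (by norm_num), mul_zero]
  · set q : ℝ := 3 * V / (4 * Real.pi) with hqdef
    have hq : 0 < q := by positivity
    set R : ℝ := q ^ ((1 : ℝ) / 3) with hRdef
    have hR : 0 < R := Real.rpow_pos_of_pos hq _
    have hR3 : R ^ 3 = q := by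
      rw [hRdef, ← Real.rpow_natCast (q ^ ((1:ℝ)/3)) 3, ← Real.rpow_mul hq.le]
      norm_num
    have hRV : 4 / 3 * Real.pi * R ^ 3 = V := by
      rw [hR3, hqdef]
      field_simp
    set B := Metric.ball z R with hBdef
    have hBm : MeasurableSet B := measurableSet_ball
    have hB : volume B = ENNReal.ofReal V := by rw [hBdef, vol_ball3 z hR.le, hRV]
    set F : EuclideanSpace ℝ (Fin 3) → ENNReal := fun y => ENNReal.ofReal (f y) with hFdef
    -- split integrals
    have hsplitS : ∫⁻ y in S, F y = (∫⁻ y in S ∩ B, F y) + ∫⁻ y in S \ B, F y := by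
      rw [← lintegral_union (hS.diff hBm)
        (disjoint_sdiff_self_right.mono_left Set.inter_subset_right), Set.inter_union_diff]
    have hsplitB : ∫⁻ y in B, F y = (∫⁻ y in S ∩ B, F y) + ∫⁻ y in B \ S, F y := by
      rw [show S ∩ B = B ∩ S from Set.inter_comm S B, ← lintegral_union (hBm.diff hS)
        (disjoint_sdiff_self_right.mono_left Set.inter_subset_right), Set.inter_union_diff]
    have hfinB : volume B ≠ ⊤ := by rw [hB]; exact ENNReal.ofReal_ne_top
    have hfinS : volume S ≠ ⊤ := by rw [hV]; exact ENNReal.ofReal_ne_top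
    have hmeq : volume (S \ B) = volume (B \ S) := by
      rw [measure_diff' _ hBm.nullMeasurableSet hfinB,
        measure_diff' _ hS.nullMeasurableSet hfinS, Set.union_comm B S, hV, hB]
    have hupper : ∫⁻ y in S \ B, F y ≤ ENNReal.ofReal (1 / R) * volume (S \ B) := by
      calc ∫⁻ y in S \ B, F y ≤ ∫⁻ _ in S \ B, ENNReal.ofReal (1 / R) := by
            refine setLIntegral_mono measurable_const fun y hy => ?_
            refine ENNReal.ofReal_le_ofReal ?_
            have hRd : R ≤ dist y z := by
              have := hy.2
              simpa [hBdef, Metric.mem_ball, not_lt] using this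
            exact one_div_le_one_div_of_le hR hRd
        _ = ENNReal.ofReal (1 / R) * volume (S \ B) := setLIntegral_const _ _
    have hlower : ENNReal.ofReal (1 / R) * volume (B \ S) ≤ ∫⁻ y in B \ S, F y := by
      have hz : ∀ᵐ y ∂(volume : Measure (EuclideanSpace ℝ (Fin 3))), y ≠ z := by
        have h0 : volume ({z} : Set (EuclideanSpace ℝ (Fin 3))) = 0 := measure_singleton z
        simpa using measure_eq_zero_iff_ae_notMem.mp h0
      have key : ∀ᵐ y ∂(volume : Measure (EuclideanSpace ℝ (Fin 3))),
          y ∈ B \ S → ENNReal.ofReal (1 / R) ≤ F y := by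
        filter_upwards [hz] with y hy hyB
        have hd0 : 0 < dist y z := dist_pos.mpr hy
        have hdR : dist y z < R := by simpa [hBdef, Metric.mem_ball] using hyB.1
        exact ENNReal.ofReal_le_ofReal (one_div_le_one_div_of_le hd0 hdR.le)
      have hae : ∀ᵐ y ∂(volume.restrict (B \ S)), ENNReal.ofReal (1 / R) ≤ F y :=
        (ae_restrict_iff' (hBm.diff hS)).mpr key
      calc ENNReal.ofReal (1 / R) * volume (B \ S)
          = ∫⁻ _ in B \ S, ENNReal.ofReal (1 / R) := (setLIntegral_const _ _).symm
        _ ≤ ∫⁻ y in B \ S, F y := lintegral_mono_ae hae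
    have h1 : ∫⁻ y in S, F y ≤ ∫⁻ y in B, F y := by
      rw [hsplitS, hsplitB]
      exact add_le_add le_rfl (hupper.trans (hmeq ▸ hlower))
    -- compute the ball integral via layer cake
    have h2 : ∫⁻ y in B, F y ≤ ENNReal.ofReal (2 * Real.pi * R ^ 2) := by
      have hlayer := lintegral_eq_lintegral_meas_le (volume.restrict B)
        (Filter.Eventually.of_forall hf0) hfm.aemeasurable
      rw [hFdef]
      rw [hlayer]
      have hsplit : Set.Ioi (0:ℝ) = Set.Ioc 0 R⁻¹ ∪ Set.Ioi R⁻¹ :=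
        (Set.Ioc_union_Ioi_eq_Ioi (by positivity)).symm
      calc ∫⁻ t in Set.Ioi (0:ℝ), (volume.restrict B) {a | t ≤ f a}
          ≤ (∫⁻ t in Set.Ioc (0:ℝ) R⁻¹, (volume.restrict B) {a | t ≤ f a}) +
            ∫⁻ t in Set.Ioi R⁻¹, (volume.restrict B) {a | t ≤ f a} := by
            rw [hsplit]
            exact lintegral_union_le _ _ _
        _ ≤ ENNReal.ofReal (4 / 3 * Real.pi * R ^ 2) +
            ENNReal.ofReal (4 / 3 * Real.pi * (R ^ 2 / 2)) := by
            gcongr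
            · -- first part
              calc ∫⁻ t in Set.Ioc (0:ℝ) R⁻¹, (volume.restrict B) {a | t ≤ f a}
                  ≤ ∫⁻ _ in Set.Ioc (0:ℝ) R⁻¹, volume B := by
                    refine setLIntegral_mono measurable_const fun t _ => ?_
                    rw [Measure.restrict_apply' hBm]
                    exact measure_mono Set.inter_subset_right
                _ = volume B * ENNReal.ofReal R⁻¹ := by
                    rw [setLIntegral_const, Real.volume_Ioc, sub_zero]
                _ ≤ ENNReal.ofReal (4 / 3 * Real.pi * R ^ 2) := by
                    rw [hB, ← hRV, ← ENNReal.ofReal_mul (by positivity)]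
                    refine ENNReal.ofReal_le_ofReal (le_of_eq ?_)
                    field_simp
            · -- second part
              have hRinv : (0:ℝ) < R⁻¹ := by positivity
              calc ∫⁻ t in Set.Ioi R⁻¹, (volume.restrict B) {a | t ≤ f a}
                  ≤ ∫⁻ t in Set.Ioi R⁻¹, ENNReal.ofReal (4 / 3 * Real.pi * t ^ (-3:ℝ)) := by
                    refine setLIntegral_mono (by fun_prop) fun t ht => ?_
                    have ht0 : (0:ℝ) < t := hRinv.trans ht
                    have hsub : {a | t ≤ f a} ∩ B ⊆ Metric.closedBall z t⁻¹ := by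
                      intro a ha
                      have hta : t ≤ 1 / dist a z := ha.1
                      have hd0 : 0 < dist a z := by
                        by_contra h
                        have : dist a z = 0 := le_antisymm (not_lt.mp h) dist_nonneg
                        have hta' : t ≤ 1 / dist a z := hta
                        rw [this, div_zero] at hta'
                        exact absurd hta' (not_le.mpr ht0)
                      have : dist a z ≤ 1 / t := by
                        have h2 := one_div_le_one_div_of_le ht0 hta
                        rwa [one_div_one_div] at h2
                      simpa [Metric.mem_closedBall, one_div] using this
                    rw [Measure.restrict_apply' hBm]
                    calc volume ({a | t ≤ f a} ∩ B) ≤ volume (Metric.closedBall z t⁻¹) :=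
                          measure_mono hsub
                      _ = ENNReal.ofReal (4 / 3 * Real.pi * t ^ (-3:ℝ)) := by
                          have h3 : t ^ (-3:ℝ) = t⁻¹ ^ 3 := by
                            rw [show (-3:ℝ) = -(3:ℕ) by norm_num, Real.rpow_neg ht0.le,
                              Real.rpow_natCast, inv_pow]
                          rw [Measure.addHaar_closedBall_eq_addHaar_ball,
                            vol_ball3 z (by positivity), h3]
                _ ≤ ENNReal.ofReal (4 / 3 * Real.pi * (R ^ 2 / 2)) := by
                    have hint : IntegrableOn (fun t : ℝ => t ^ (-3:ℝ)) (Set.Ioi R⁻¹) :=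
                      integrableOn_Ioi_rpow_of_lt (by norm_num) hRinv
                    have hintc : IntegrableOn
                        (fun t : ℝ => 4 / 3 * Real.pi * t ^ (-3:ℝ)) (Set.Ioi R⁻¹) :=
                      hint.const_mul _
                    have hnn : 0 ≤ᵐ[volume.restrict (Set.Ioi R⁻¹)]
                        fun t : ℝ => 4 / 3 * Real.pi * t ^ (-3:ℝ) :=
                      (ae_restrict_iff' measurableSet_Ioi).2 (ae_of_all _ fun t ht =>
                        mul_nonneg (by positivity)
                          (Real.rpow_nonneg (hRinv.trans ht).le _))
                    rw [← ofReal_integral_eq_lintegral_ofReal hintc hnn]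
                    refine ENNReal.ofReal_le_ofReal (le_of_eq ?_)
                    rw [integral_const_mul, integral_Ioi_rpow_of_lt (by norm_num) hRinv]
                    have h2' : (R⁻¹ : ℝ) ^ ((-3:ℝ) + 1) = R ^ 2 := by
                      rw [show (-3:ℝ) + 1 = -(2:ℕ) by norm_num, Real.rpow_neg (by positivity),
                        Real.rpow_natCast, inv_pow, inv_inv]
                    rw [h2']
                    ring
        _ = ENNReal.ofReal (2 * Real.pi * R ^ 2) := by
            rw [← ENNReal.ofReal_add (by positivity) (by positivity)]
            congr 1
            ring
    have hieq : ∫ y in S, f y ∂volume = (∫⁻ y in S, F y).toReal :=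
      integral_eq_lintegral_of_nonneg_ae (Filter.Eventually.of_forall hf0)
        hfm.aestronglyMeasurable
    have hfinal : (∫⁻ y in S, F y) ≤ ENNReal.ofReal (2 * Real.pi * R ^ 2) := h1.trans h2
    have hle : (∫⁻ y in S, F y).toReal ≤ 2 * Real.pi * R ^ 2 := by
      have := ENNReal.toReal_mono ENNReal.ofReal_ne_top hfinal
      rwa [ENNReal.toReal_ofReal (by positivity)] at this
    have hR2 : R ^ 2 = q ^ ((2:ℝ)/3) := by
      rw [hRdef, ← Real.rpow_natCast (q ^ ((1:ℝ)/3)) 2, ← Real.rpow_mul hq.le]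
      norm_num
    calc ∫ y in S, 1 / dist y z ∂volume = (∫⁻ y in S, F y).toReal := hieq
      _ ≤ 2 * Real.pi * R ^ 2 := hle
      _ = 2 * Real.pi * q ^ ((2:ℝ)/3) := by rw [hR2]
end

section
/- Fix κ ≥ 0 and z ∈ ℝ³. Let Q ⊂ ℝ³ be a convex, compact set with dist(z, Q) ≥ δ > 0, let z₀ ∈ Q, and let Y : ℝ³ → ℂ be continuously differentiable on an open set containing Q. Then |∫_Q Φ_κ(z, y) Y(y) dy − Φ_κ(z, z₀) Y(z₀) · vol(Q)| ≤ vol(Q) · (sup_{y∈Q} |y − z₀|) · (1/(4πδ)) · [ (1/δ + κ) · sup_{y∈Q} |Y(y)| + sup_{y∈Q} ‖∇Y(y)‖ ]. -/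
open MeasureTheory

/-- The fundamental solution of the Helmholtz equation in `ℝ³` with wave number `κ`:
`Φ_κ(x,y) = e^{iκ|x−y|} / (4π|x−y|)`. -/
noncomputable def Phi (κ : ℝ) (x y : EuclideanSpace ℝ (Fin 3)) : ℂ :=
  Complex.exp (Complex.I * (κ : ℂ) * ((dist x y : ℝ) : ℂ)) /
    (((4 * Real.pi * dist x y : ℝ) : ℂ))

-- helper: the 1-d profile function
noncomputable def hfun (κ : ℝ) (t : ℝ) : ℂ :=
  Complex.exp (Complex.I * (κ : ℂ) * (t : ℂ)) / ((4 * Real.pi * t : ℝ) : ℂ)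

lemma Phi_eq (κ : ℝ) (z y : EuclideanSpace ℝ (Fin 3)) : Phi κ z y = hfun κ (dist z y) := rfl

lemma norm_exp_ikr (κ t : ℝ) : ‖Complex.exp (Complex.I * (κ : ℂ) * (t : ℂ))‖ = 1 := by
  rw [Complex.norm_exp]
  have : (Complex.I * (κ : ℂ) * (t : ℂ)).re = 0 := by simp [Complex.mul_re]
  rw [this, Real.exp_zero]

lemma norm_hfun (κ t : ℝ) (ht : 0 < t) : ‖hfun κ t‖ = 1 / (4 * Real.pi * t) := by
  have h4 : (0:ℝ) < 4 * Real.pi * t := by positivity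
  rw [hfun, norm_div, norm_exp_ikr, Complex.norm_real, Real.norm_eq_abs, abs_of_pos h4]

lemma hasDerivAt_hfun (κ : ℝ) (t : ℝ) (ht : 0 < t) :
    HasDerivAt (hfun κ)
      ((Complex.exp (Complex.I * κ * t) * (Complex.I * κ) * ((4 * Real.pi * t : ℝ) : ℂ)
        - Complex.exp (Complex.I * κ * t) * ((4 * Real.pi : ℝ) : ℂ)) /
        (((4 * Real.pi * t : ℝ) : ℂ)) ^ 2) t := by
  have h1 : HasDerivAt (fun s : ℝ => (s : ℂ)) 1 t := by
    exact (hasDerivAt_id t).ofReal_comp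
  have h2 : HasDerivAt (fun s : ℝ => Complex.I * κ * (s : ℂ)) (Complex.I * κ) t := by
    simpa using h1.const_mul (Complex.I * (κ:ℂ))
  have h3 := h2.cexp
  have h4 : HasDerivAt (fun s : ℝ => (((4 * Real.pi * s : ℝ)) : ℂ)) ((4 * Real.pi : ℝ) : ℂ) t := by
    have := h1.const_mul ((4 * Real.pi : ℝ) : ℂ)
    simp only [mul_one] at this
    convert this using 2 with s
    · rfl
    · push_cast
      ring
  have hne : (((4 * Real.pi * t : ℝ)) : ℂ) ≠ 0 := by
    have : (0:ℝ) < 4 * Real.pi * t := by positivity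
    exact_mod_cast this.ne'
  have := h3.div h4 hne
  exact this

lemma norm_hfun_deriv_le (κ : ℝ) (hκ : 0 ≤ κ) (δ t : ℝ) (hδ : 0 < δ) (ht : δ ≤ t) :
    ‖(Complex.exp (Complex.I * κ * t) * (Complex.I * κ) * ((4 * Real.pi * t : ℝ) : ℂ)
        - Complex.exp (Complex.I * κ * t) * ((4 * Real.pi : ℝ) : ℂ)) /
        (((4 * Real.pi * t : ℝ) : ℂ)) ^ 2‖ ≤ 1 / (4 * Real.pi * δ) * (1 / δ + κ) := by
  have hπ : (0:ℝ) < Real.pi := Real.pi_pos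
  have ht0 : (0:ℝ) < t := hδ.trans_le ht
  have h4t : (0:ℝ) < 4 * Real.pi * t := by positivity
  have hnum : ‖Complex.exp (Complex.I * κ * t) * (Complex.I * κ) * ((4 * Real.pi * t : ℝ) : ℂ)
      - Complex.exp (Complex.I * κ * t) * ((4 * Real.pi : ℝ) : ℂ)‖ ≤
      κ * (4 * Real.pi * t) + 4 * Real.pi := by
    refine (norm_sub_le _ _).trans ?_
    have e1 : ‖Complex.exp (Complex.I * κ * t) * (Complex.I * κ) * ((4 * Real.pi * t : ℝ) : ℂ)‖
        = κ * (4 * Real.pi * t) := by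
      rw [norm_mul, norm_mul, norm_exp_ikr, one_mul, norm_mul, Complex.norm_I, one_mul,
        Complex.norm_real, Complex.norm_real, Real.norm_eq_abs, Real.norm_eq_abs,
        abs_of_nonneg hκ, abs_of_pos h4t]
    have e2 : ‖Complex.exp (Complex.I * κ * t) * ((4 * Real.pi : ℝ) : ℂ)‖ = 4 * Real.pi := by
      rw [norm_mul, norm_exp_ikr, one_mul, Complex.norm_real, Real.norm_eq_abs,
        abs_of_pos (by positivity)]
    rw [e1, e2]
  have hden : ‖(((4 * Real.pi * t : ℝ)) : ℂ) ^ 2‖ = (4 * Real.pi * t) ^ 2 := by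
    rw [norm_pow, Complex.norm_real, Real.norm_eq_abs, abs_of_pos h4t]
  rw [norm_div, hden]
  have step1 : (κ * (4 * Real.pi * t) + 4 * Real.pi) / (4 * Real.pi * t) ^ 2
      ≤ 1 / (4 * Real.pi * δ) * (1 / δ + κ) := by
    rw [div_le_iff₀ (by positivity)]
    have h1 : 1 / (4 * Real.pi * δ) * (1 / δ + κ) = (1 + κ * δ) / (4 * Real.pi * δ ^ 2) := by
      field_simp
    rw [h1, div_mul_eq_mul_div, le_div_iff₀ (by positivity)]
    have core : κ * t * δ ^ 2 + δ ^ 2 ≤ t ^ 2 + κ * δ * t ^ 2 := by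
      nlinarith [mul_le_mul_of_nonneg_left ht (mul_nonneg (mul_nonneg hκ ht0.le) hδ.le),
        mul_self_le_mul_self hδ.le ht]
    nlinarith [mul_le_mul_of_nonneg_left core (by positivity : (0:ℝ) ≤ 16 * Real.pi ^ 2)]
  exact le_trans (by gcongr) step1


theorem stmt10 (κ : ℝ) (hκ : 0 ≤ κ) (z : EuclideanSpace ℝ (Fin 3))
    (δ : ℝ) (hδ : 0 < δ)
    (Q : Set (EuclideanSpace ℝ (Fin 3))) (hconv : Convex ℝ Q) (hcomp : IsCompact Q)
    (hdist : δ ≤ Metric.infDist z Q)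
    (z₀ : EuclideanSpace ℝ (Fin 3)) (hz₀ : z₀ ∈ Q)
    (Y : EuclideanSpace ℝ (Fin 3) → ℂ) (U : Set (EuclideanSpace ℝ (Fin 3)))
    (hU : IsOpen U) (hQU : Q ⊆ U) (hY : ContDiffOn ℝ 1 Y U) :
    ‖(∫ y in Q, Phi κ z y * Y y ∂(volume)) - (volume Q).toReal • (Phi κ z z₀ * Y z₀)‖ ≤
      (volume Q).toReal * (⨆ y : Q, ‖(y : EuclideanSpace ℝ (Fin 3)) - z₀‖) *
        (1 / (4 * Real.pi * δ)) *
        ((1 / δ + κ) * (⨆ y : Q, ‖Y (y : EuclideanSpace ℝ (Fin 3))‖) +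
          ⨆ y : Q, ‖fderiv ℝ Y (y : EuclideanSpace ℝ (Fin 3))‖) := by
  have hπ : (0:ℝ) < Real.pi := Real.pi_pos
  have hmeas : MeasurableSet Q := hcomp.isClosed.measurableSet
  have hvol : volume Q < ⊤ := hcomp.measure_lt_top
  set f : EuclideanSpace ℝ (Fin 3) → ℂ := fun y => Phi κ z y * Y y with hfdef
  have hdpt : ∀ y ∈ Q, δ ≤ dist z y := fun y hy =>
    hdist.trans (Metric.infDist_le_dist_of_mem hy)
  set M := ⨆ y : Q, ‖(y : EuclideanSpace ℝ (Fin 3)) - z₀‖ with hMdef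
  set SY := ⨆ y : Q, ‖Y (y : EuclideanSpace ℝ (Fin 3))‖ with hSYdef
  set SD := ⨆ y : Q, ‖fderiv ℝ Y (y : EuclideanSpace ℝ (Fin 3))‖ with hSDdef
  have hbdd : ∀ g : EuclideanSpace ℝ (Fin 3) → ℝ, ContinuousOn g Q →
      BddAbove (Set.range fun y : Q => g y) := by
    intro g hg
    rw [← Set.image_eq_range]
    exact (hcomp.image_of_continuousOn hg).bddAbove
  have hYc : ContinuousOn Y Q := hY.continuousOn.mono hQU
  have hY'c : ContinuousOn (fun y => ‖fderiv ℝ Y y‖) Q :=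
    ((hY.continuousOn_fderiv_of_isOpen hU le_rfl).mono hQU).norm
  have hbM : BddAbove (Set.range fun y : Q => ‖(y : EuclideanSpace ℝ (Fin 3)) - z₀‖) :=
    hbdd _ ((continuous_id.sub continuous_const).norm.continuousOn)
  have hbSY : BddAbove (Set.range fun y : Q => ‖Y (y : EuclideanSpace ℝ (Fin 3))‖) := by
    have := hbdd (fun y => ‖Y y‖) hYc.norm
    simpa using this
  have hbSD : BddAbove (Set.range fun y : Q => ‖fderiv ℝ Y (y : EuclideanSpace ℝ (Fin 3))‖) :=
    hbdd _ hY'c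
  have hSYle : ∀ y, y ∈ Q → ‖Y y‖ ≤ SY := by
    intro y hy
    exact le_ciSup hbSY ⟨y, hy⟩
  have hSDle : ∀ y, y ∈ Q → ‖fderiv ℝ Y y‖ ≤ SD := fun y hy => le_ciSup hbSD ⟨y, hy⟩
  have hMle : ∀ y, y ∈ Q → ‖y - z₀‖ ≤ M := fun y hy => le_ciSup hbM ⟨y, hy⟩
  have hSY0 : 0 ≤ SY := le_trans (norm_nonneg (Y z₀)) (hSYle z₀ hz₀)
  have hSD0 : 0 ≤ SD := le_trans (norm_nonneg _) (hSDle z₀ hz₀)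
  have hM0 : 0 ≤ M := le_trans (norm_nonneg _) (hMle z₀ hz₀)
  set L : ℝ := 1 / (4 * Real.pi * δ) * ((1 / δ + κ) * SY + SD) with hLdef
  have hL0 : 0 ≤ L :=
    mul_nonneg (by positivity) (add_nonneg (mul_nonneg (by positivity) hSY0) hSD0)
  -- derivative of the Phi part
  have hρlip : LipschitzWith 1 (fun y : EuclideanSpace ℝ (Fin 3) => ‖y - z‖) := by
    apply LipschitzWith.of_dist_le_mul
    intro a b
    rw [Real.dist_eq, NNReal.coe_one, one_mul, dist_eq_norm]
    have := abs_norm_sub_norm_le (a - z) (b - z)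
    simpa [sub_sub_sub_cancel_right] using this
  have hPdiff : ∀ y ∈ Q, ∃ P : EuclideanSpace ℝ (Fin 3) →L[ℝ] ℂ,
      HasFDerivAt (Phi κ z) P y ∧ ‖P‖ ≤ 1 / (4 * Real.pi * δ) * (1 / δ + κ) := by
    intro y hy
    have hd : δ ≤ dist z y := hdpt y hy
    have hd0 : 0 < dist z y := hδ.trans_le hd
    have hdn : dist z y = ‖y - z‖ := by rw [dist_comm, dist_eq_norm]
    have hyz : y - z ≠ 0 := by
      intro h
      rw [hdn, h, norm_zero] at hd0
      exact lt_irrefl _ hd0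
    have hρd : DifferentiableAt ℝ (fun w : EuclideanSpace ℝ (Fin 3) => ‖w - z‖) y :=
      (differentiableAt_id.sub (differentiableAt_const z)).norm ℝ hyz
    have hρ := hρd.hasFDerivAt
    have hρn : ‖fderiv ℝ (fun w : EuclideanSpace ℝ (Fin 3) => ‖w - z‖) y‖ ≤ 1 := by
      simpa using norm_fderiv_le_of_lipschitz ℝ hρlip (x₀ := y)
    have hh := hasDerivAt_hfun κ (dist z y) hd0
    rw [hdn] at hh
    have hhF := hh.hasFDerivAt
    have hcomp' := hhF.comp y hρ
    set c : ℂ := (Complex.exp (Complex.I * κ * ‖y - z‖) * (Complex.I * κ) *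
        ((4 * Real.pi * ‖y - z‖ : ℝ) : ℂ) -
        Complex.exp (Complex.I * κ * ‖y - z‖) * ((4 * Real.pi : ℝ) : ℂ)) /
        (((4 * Real.pi * ‖y - z‖ : ℝ) : ℂ)) ^ 2 with hc
    refine ⟨(ContinuousLinearMap.smulRight (1 : ℝ →L[ℝ] ℝ) c).comp
        (fderiv ℝ (fun w : EuclideanSpace ℝ (Fin 3) => ‖w - z‖) y), ?_, ?_⟩
    · have hPhifun : Phi κ z =
          (hfun κ) ∘ (fun w : EuclideanSpace ℝ (Fin 3) => ‖w - z‖) := by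
        funext w
        rw [Function.comp_apply, Phi_eq, dist_comm, dist_eq_norm]
      rw [hPhifun]
      exact hcomp'
    · have h1 := norm_hfun_deriv_le κ hκ δ ‖y - z‖ hδ (hdn ▸ hd)
      refine le_trans (ContinuousLinearMap.opNorm_comp_le _ _) ?_
      rw [ContinuousLinearMap.norm_smulRight_apply]
      calc ‖(1 : ℝ →L[ℝ] ℝ)‖ * ‖_‖ * ‖fderiv ℝ (fun w : EuclideanSpace ℝ (Fin 3) => ‖w - z‖) y‖
          ≤ 1 * (1 / (4 * Real.pi * δ) * (1 / δ + κ)) * 1 := by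
            refine mul_le_mul (mul_le_mul ?_ h1 (norm_nonneg _) zero_le_one) hρn
              (norm_nonneg _) (by positivity)
            simpa using ContinuousLinearMap.norm_id_le
        _ = 1 / (4 * Real.pi * δ) * (1 / δ + κ) := by ring
  -- pointwise bound on the norm of Phi
  have hPhin : ∀ y ∈ Q, ‖Phi κ z y‖ ≤ 1 / (4 * Real.pi * δ) := by
    intro y hy
    have hd : δ ≤ dist z y := hdpt y hy
    have hd0 : 0 < dist z y := hδ.trans_le hd
    rw [Phi_eq, norm_hfun κ _ hd0]
    apply one_div_le_one_div_of_le (by positivity)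
    have : 4 * Real.pi * δ ≤ 4 * Real.pi * dist z y := by
      apply mul_le_mul_of_nonneg_left hd (by positivity)
    exact this
  -- differentiability and derivative bound for f on Q
  have hstep : ∀ x ∈ Q, DifferentiableAt ℝ f x ∧ ‖fderiv ℝ f x‖ ≤ L := by
    intro x hx
    obtain ⟨P, hP, hPn⟩ := hPdiff x hx
    have hYd : DifferentiableAt ℝ Y x :=
      (hY.contDiffAt (hU.mem_nhds (hQU hx))).differentiableAt one_ne_zero
    have hmul : HasFDerivAt f (Phi κ z x • fderiv ℝ Y x + Y x • P) x :=
      hP.mul hYd.hasFDerivAt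
    refine ⟨hmul.differentiableAt, ?_⟩
    rw [hmul.fderiv]
    calc ‖Phi κ z x • fderiv ℝ Y x + Y x • P‖
        ≤ ‖Phi κ z x • fderiv ℝ Y x‖ + ‖Y x • P‖ := norm_add_le _ _
      _ = ‖Phi κ z x‖ * ‖fderiv ℝ Y x‖ + ‖Y x‖ * ‖P‖ := by
            rw [norm_smul (Phi κ z x) (fderiv ℝ Y x), norm_smul (Y x) P]
      _ ≤ (1 / (4 * Real.pi * δ)) * SD + SY * (1 / (4 * Real.pi * δ) * (1 / δ + κ)) := by
          gcongr
          · exact hPhin x hx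
          · exact hSDle x hx
          · exact hSYle x hx
      _ = L := by rw [hLdef]; ring
  have hdiff : ∀ x ∈ Q, DifferentiableAt ℝ f x := fun x hx => (hstep x hx).1
  have hbound : ∀ x ∈ Q, ‖fderiv ℝ f x‖ ≤ L := fun x hx => (hstep x hx).2
  have key : ∀ y ∈ Q, ‖f y - f z₀‖ ≤ M * L := by
    intro y hy
    calc ‖f y - f z₀‖ ≤ L * ‖y - z₀‖ :=
          Convex.norm_image_sub_le_of_norm_fderiv_le hdiff hbound hconv hz₀ hy
      _ ≤ L * M := mul_le_mul_of_nonneg_left (hMle y hy) hL0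
      _ = M * L := mul_comm _ _
  have hfc : ContinuousOn f Q := fun x hx => (hdiff x hx).continuousAt.continuousWithinAt
  have hint : IntegrableOn f Q := hfc.integrableOn_compact hcomp
  have hsub : (∫ y in Q, f y) - (volume Q).toReal • f z₀ = ∫ y in Q, (f y - f z₀) := by
    rw [integral_sub hint ((integrableOn_const hvol.ne)), setIntegral_const]
    rfl
  calc ‖(∫ y in Q, f y) - (volume Q).toReal • f z₀‖
      = ‖∫ y in Q, (f y - f z₀)‖ := by rw [hsub]
    _ ≤ (M * L) * (volume Q).toReal :=
        norm_setIntegral_le_of_norm_le_const hvol key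
    _ = (volume Q).toReal * M * (1 / (4 * Real.pi * δ)) * ((1 / δ + κ) * SY + SD) := by
        rw [hLdef]; ring
end
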